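/- (Gradient Structure, Proposition 2, finite case.) Let Y be a nonempty finite set, let p and q be probability mass functions on Y with q(y) > 0 for all y, and let g : ℝ^d × Y → ℝ be such that g(θ, y) > 0 for all θ, y and θ ↦ g(θ, y) is differentiable for each y. Define the reward r(θ, y) = log g(θ, y) − log q(y), and for α > 0, α ≠ 1, define L(θ) = −(1/(α−1)) log Σ_y p(y) e^{(α−1) r(θ,y)} + (1/α) log Σ_y q(y) e^{α r(θ,y)}. Then the gradient of L at θ equals −Σ_y p(y) w⁺(y) ∇_θ log g(θ, y) + Σ_y q(y) w⁻(y) ∇_θ log g(θ, y), where w⁺(y) = e^{(α−1) r(θ,y)} / Σ_{y'} p(y') e^{(α−1) r(θ,y')} and w⁻(y) = e^{α r(θ,y)} / Σ_{y'} q(y') e^{α r(θ,y')}. -/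

import Mathlib

open MeasureTheory Filter Topology

theorem stmt_12 {Y : Type*} [Fintype Y] [Nonempty Y] (d : ℕ)
    (p q : Y → ℝ) (hp0 : ∀ y, 0 ≤ p y) (hp1 : ∑ y, p y = 1)
    (hq0 : ∀ y, 0 < q y) (hq1 : ∑ y, q y = 1)
    (g : EuclideanSpace ℝ (Fin d) → Y → ℝ)
    (hgpos : ∀ θ y, 0 < g θ y)
    (hgdiff : ∀ y, Differentiable ℝ (fun θ => g θ y))
    (α : ℝ) (hα : 0 < α) (hα1 : α ≠ 1)
    (θ : EuclideanSpace ℝ (Fin d)) :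
    gradient
      (fun θ' =>
        -(α - 1)⁻¹ * Real.log (∑ y, p y * Real.exp ((α - 1) * (Real.log (g θ' y) - Real.log (q y))))
          + α⁻¹ * Real.log (∑ y, q y * Real.exp (α * (Real.log (g θ' y) - Real.log (q y))))) θ
    = -(∑ y, (p y * (Real.exp ((α - 1) * (Real.log (g θ y) - Real.log (q y)))
            / ∑ y', p y' * Real.exp ((α - 1) * (Real.log (g θ y') - Real.log (q y'))))) •
          gradient (fun θ' => Real.log (g θ' y)) θ)
      + ∑ y, (q y * (Real.exp (α * (Real.log (g θ y) - Real.log (q y)))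
            / ∑ y', q y' * Real.exp (α * (Real.log (g θ y') - Real.log (q y'))))) •
          gradient (fun θ' => Real.log (g θ' y)) θ := by
  classical
  have hdlog : ∀ y, DifferentiableAt ℝ (fun θ' => Real.log (g θ' y)) θ :=
    fun y => ((hgdiff y) θ).log (hgpos θ y).ne'
  set D : Y → (EuclideanSpace ℝ (Fin d) →L[ℝ] ℝ) :=
    fun y => fderiv ℝ (fun θ' => Real.log (g θ' y)) θ with hDdef
  have hD : ∀ y, HasFDerivAt (fun θ' => Real.log (g θ' y)) (D y) θ :=
    fun y => (hdlog y).hasFDerivAt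
  have hSppos : 0 < ∑ y, p y * Real.exp ((α - 1) * (Real.log (g θ y) - Real.log (q y))) := by
    have hex : ∃ y : Y, 0 < p y := by
      by_contra h
      push_neg at h
      have : ∑ y, p y = 0 := le_antisymm (Finset.sum_nonpos (fun y _ => h y))
        (Finset.sum_nonneg (fun y _ => hp0 y))
      rw [hp1] at this; norm_num at this
    obtain ⟨y0, hy0⟩ := hex
    refine Finset.sum_pos' (fun y _ => mul_nonneg (hp0 y) (Real.exp_pos _).le) ?_
    exact ⟨y0, Finset.mem_univ _, mul_pos hy0 (Real.exp_pos _)⟩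
  have hSqpos : 0 < ∑ y, q y * Real.exp (α * (Real.log (g θ y) - Real.log (q y))) :=
    Finset.sum_pos (fun y _ => mul_pos (hq0 y) (Real.exp_pos _)) Finset.univ_nonempty
  set Sp := ∑ y, p y * Real.exp ((α - 1) * (Real.log (g θ y) - Real.log (q y))) with hSp
  set Sq := ∑ y, q y * Real.exp (α * (Real.log (g θ y) - Real.log (q y))) with hSq
  have hα1' : α - 1 ≠ 0 := sub_ne_zero_of_ne hα1
  have hA : HasFDerivAt
      (fun θ' => ∑ y, p y * Real.exp ((α - 1) * (Real.log (g θ' y) - Real.log (q y))))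
      (∑ y, (p y * (Real.exp ((α - 1) * (Real.log (g θ y) - Real.log (q y))) * (α - 1))) • D y)
      θ := by
    refine HasFDerivAt.fun_sum (fun y _ => ?_)
    have h1 : HasFDerivAt (fun θ' => (α - 1) * (Real.log (g θ' y) - Real.log (q y)))
        ((α - 1) • D y) θ := ((hD y).sub_const _).const_mul _
    refine (h1.exp.const_mul (p y)).congr_fderiv ?_
    rw [smul_smul, smul_smul]; ring_nf
  have hB : HasFDerivAt
      (fun θ' => ∑ y, q y * Real.exp (α * (Real.log (g θ' y) - Real.log (q y))))
      (∑ y, (q y * (Real.exp (α * (Real.log (g θ y) - Real.log (q y))) * α)) • D y)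
      θ := by
    refine HasFDerivAt.fun_sum (fun y _ => ?_)
    have h1 : HasFDerivAt (fun θ' => α * (Real.log (g θ' y) - Real.log (q y)))
        (α • D y) θ := ((hD y).sub_const _).const_mul _
    refine (h1.exp.const_mul (q y)).congr_fderiv ?_
    rw [smul_smul, smul_smul]; ring_nf
  have hL : HasFDerivAt
      (fun θ' =>
        -(α - 1)⁻¹ * Real.log (∑ y, p y * Real.exp ((α - 1) * (Real.log (g θ' y) - Real.log (q y))))
          + α⁻¹ * Real.log (∑ y, q y * Real.exp (α * (Real.log (g θ' y) - Real.log (q y)))))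
      (-(∑ y, (p y * (Real.exp ((α - 1) * (Real.log (g θ y) - Real.log (q y))) / Sp)) • D y)
        + ∑ y, (q y * (Real.exp (α * (Real.log (g θ y) - Real.log (q y))) / Sq)) • D y)
      θ := by
    have hlogA := (hA.log hSppos.ne').const_mul (-(α - 1)⁻¹)
    have hlogB := (hB.log hSqpos.ne').const_mul (α⁻¹)
    refine (hlogA.add hlogB).congr_fderiv ?_
    rw [smul_smul, smul_smul, Finset.smul_sum, Finset.smul_sum]
    congr 1
    · rw [← Finset.sum_neg_distrib]
      refine Finset.sum_congr rfl (fun y _ => ?_)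
      rw [smul_smul]; refine Eq.trans ?_ (neg_smul _ (D y))
      congr 1
      rw [← hSp]
      field_simp
    · refine Finset.sum_congr rfl (fun y _ => ?_)
      rw [smul_smul]
      congr 1
      rw [← hSq]
      field_simp
  have key := hL.hasGradientAt
  rw [key.gradient]
  rw [map_add, map_neg, map_sum, map_sum]
  congr 1
  · congr 1
    refine Finset.sum_congr rfl (fun y _ => ?_)
    rw [LinearIsometryEquiv.map_smul]
    rfl
  · refine Finset.sum_congr rfl (fun y _ => ?_)
    rw [LinearIsometryEquiv.map_smul]
    rfl
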